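/- (Theorem 2, individual certification, for rNN) Let X be a metric space, c ≥ 2, r : ℝ, D a multiset over X × Fin c, and let (x_1,y_1),…,(x_t,y_t) be a testing dataset with x_i : X and y_i ∈ Fin c. For each i, let a_i := rNN_r(D,x_i), s_l^{(i)} := s_l(N_r(D,x_i)), let b_i be the largest label among those l ≠ a_i attaining the maximum of s_l^{(i)} over l ≠ a_i, and set e_i* := ⌈(s_{a_i}^{(i)} − s_{b_i}^{(i)} + 𝟙(b_i < a_i))/2⌉ − 1 ∈ ℤ. Then for every natural number e and every multiset D* over X × Fin c with S(D,D*) ≤ e, the number of indices i with rNN_r(D*,x_i) = y_i is at least the number of indices i with a_i = y_i and (e : ℤ) ≤ e_i*. -/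

import Mathlib

/-- Poisoning size between two multisets: `max (card A) (card B) - card (A ∩ B)`. -/
noncomputable def pSize {α : Type*} (A B : Multiset α) : ℕ :=
  haveI := Classical.decEq α
  max A.card B.card - (A ∩ B).card

/-- Number of votes for label `l` in a multiset of labeled examples (counted with
multiplicity). -/
def votes {X : Type*} {c : ℕ} (T : Multiset (X × Fin c)) (l : Fin c) : ℕ :=
  T.countP (fun p => p.2 = l)

/-- Tie-broken majority label: the largest label (in the order of `Fin c`) among the
labels attaining the maximum vote count. -/
noncomputable def majLabel {X : Type*} {c : ℕ} (hc : 0 < c) (T : Multiset (X × Fin c)) :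
    Fin c :=
  (Finset.univ.filter (fun l : Fin c => ∀ l', votes T l' ≤ votes T l)).max'
    (by
      haveI : NeZero c := ⟨hc.ne'⟩
      obtain ⟨b, -, hb⟩ := Finset.exists_max_image (Finset.univ : Finset (Fin c)) (votes T)
        Finset.univ_nonempty
      exact ⟨b, Finset.mem_filter.mpr ⟨Finset.mem_univ b, fun l' => hb l' (Finset.mem_univ l')⟩⟩)

/-- The largest label, among those `l ≠ a`, attaining the maximum of `s l` over `l ≠ a`. -/
noncomputable def secondLabel {c : ℕ} (hc : 2 ≤ c) (s : Fin c → ℕ) (a : Fin c) : Fin c :=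
  (Finset.univ.filter (fun l : Fin c => l ≠ a ∧ ∀ l', l' ≠ a → s l' ≤ s l)).max'
    (by
      have h1 : 1 < Fintype.card (Fin c) := by rw [Fintype.card_fin]; omega
      obtain ⟨l0, hl0⟩ := Fintype.exists_ne_of_one_lt_card h1 a
      have hne : (Finset.univ.filter (fun l : Fin c => l ≠ a)).Nonempty :=
        ⟨l0, Finset.mem_filter.mpr ⟨Finset.mem_univ _, hl0⟩⟩
      obtain ⟨b, hb, hbmax⟩ := Finset.exists_max_image _ s hne
      refine ⟨b, Finset.mem_filter.mpr ⟨Finset.mem_univ _, (Finset.mem_filter.mp hb).2, ?_⟩⟩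
      intro l' hl'
      exact hbmax l' (Finset.mem_filter.mpr ⟨Finset.mem_univ _, hl'⟩))

/-- rNN neighbor multiset: training examples within distance `r` of the test input `x`. -/
noncomputable def Nr {X : Type*} [MetricSpace X] {c : ℕ} (r : ℝ)
    (D : Multiset (X × Fin c)) (x : X) : Multiset (X × Fin c) :=
  haveI : DecidablePred (fun p : X × Fin c => dist p.1 x ≤ r) := Classical.decPred _
  D.filter (fun p => dist p.1 x ≤ r)

/-- rNN prediction: tie-broken majority label among the rNN neighbors. -/
noncomputable def rNNpred {X : Type*} [MetricSpace X] {c : ℕ} (hc : 0 < c) (r : ℝ)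
    (D : Multiset (X × Fin c)) (x : X) : Fin c :=
  majLabel hc (Nr r D x)

lemma votes_Nr_bounds {X : Type*} [MetricSpace X] {c : ℕ} (r : ℝ)
    (D Dstar : Multiset (X × Fin c)) (x : X) (e : ℕ) (hD : pSize D Dstar ≤ e) (l : Fin c) :
    (votes (Nr r D x) l : ℤ) - e ≤ (votes (Nr r Dstar x) l : ℤ) ∧
      (votes (Nr r Dstar x) l : ℤ) ≤ (votes (Nr r D x) l : ℤ) + e := by
  letI := Classical.decEq (X × Fin c)
  unfold pSize at hD
  set M := D ∩ Dstar with hM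
  have hMD : M ≤ D := Multiset.inter_le_left
  have hMD' : M ≤ Dstar := Multiset.inter_le_right
  have hDeq : (D - M) + M = D := tsub_add_cancel_of_le hMD
  have hDeq' : (Dstar - M) + M = Dstar := tsub_add_cancel_of_le hMD'
  have hcard : (D - M).card + M.card = D.card := by rw [← Multiset.card_add, hDeq]
  have hcard' : (Dstar - M).card + M.card = Dstar.card := by rw [← Multiset.card_add, hDeq']
  have split : ∀ (A B : Multiset (X × Fin c)),
      votes (Nr r (A + B) x) l = votes (Nr r A x) l + votes (Nr r B x) l := by
    intro A B
    simp only [Nr, votes, Multiset.filter_add, Multiset.countP_add]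
  have hsplit1 := split (D - M) M
  have hsplit2 := split (Dstar - M) M
  rw [hDeq] at hsplit1
  rw [hDeq'] at hsplit2
  have hle1 : votes (Nr r (D - M) x) l ≤ (D - M).card :=
    (Multiset.countP_le_card _ _).trans (Multiset.card_le_card (Multiset.filter_le _ _))
  have hle2 : votes (Nr r (Dstar - M) x) l ≤ (Dstar - M).card :=
    (Multiset.countP_le_card _ _).trans (Multiset.card_le_card (Multiset.filter_le _ _))
  have hD' : max D.card Dstar.card - M.card ≤ e := hD
  have h5 : D.card - M.card ≤ e := le_trans (Nat.sub_le_sub_right (le_max_left _ _) _) hD'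
  have h6 : Dstar.card - M.card ≤ e := le_trans (Nat.sub_le_sub_right (le_max_right _ _) _) hD'
  omega

lemma majLabel_eq {X : Type*} {c : ℕ} (hc : 0 < c) (T : Multiset (X × Fin c)) (a : Fin c)
    (hmax : ∀ l, votes T l ≤ votes T a) (hstrict : ∀ l, a < l → votes T l < votes T a) :
    majLabel hc T = a := by
  unfold majLabel
  apply le_antisymm
  · apply Finset.max'_le
    intro l hl
    simp only [Finset.mem_filter] at hl
    by_contra h
    push_neg at h
    exact absurd (hl.2 a) (not_le.mpr (hstrict l h))
  · exact Finset.le_max' _ a (Finset.mem_filter.mpr ⟨Finset.mem_univ _, hmax⟩)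

lemma secondLabel_mem {c : ℕ} (hc : 2 ≤ c) (s : Fin c → ℕ) (a : Fin c) :
    secondLabel hc s a ∈
      Finset.univ.filter (fun l : Fin c => l ≠ a ∧ ∀ l', l' ≠ a → s l' ≤ s l) :=
  Finset.max'_mem _ _

lemma secondLabel_strict {c : ℕ} (hc : 2 ≤ c) (s : Fin c → ℕ) (a : Fin c) (l : Fin c)
    (hba : secondLabel hc s a < a) (hla : a < l) : s l < s (secondLabel hc s a) := by
  have hmem := secondLabel_mem hc s a
  simp only [Finset.mem_filter] at hmem
  have hle : s l ≤ s (secondLabel hc s a) := hmem.2.2 l (ne_of_gt hla)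
  rcases lt_or_eq_of_le hle with h | h
  · exact h
  · exfalso
    have hlmem : l ∈ Finset.univ.filter
        (fun l : Fin c => l ≠ a ∧ ∀ l', l' ≠ a → s l' ≤ s l) :=
      Finset.mem_filter.mpr ⟨Finset.mem_univ _, ne_of_gt hla,
        fun l' hl' => h ▸ hmem.2.2 l' hl'⟩
    have : l ≤ secondLabel hc s a := Finset.le_max' _ l hlmem
    exact absurd (this.trans_lt (hba.trans hla)) (lt_irrefl l)

/-- Theorem 2, individual certification, for rNN: for any poisoned dataset
with poisoning size at most `e`, the number of correctly classified testing examples is at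
least the number of indices `i` with `a_i = y_i` and `e ≤ e_i*`. -/
theorem rnn_individual_certification {X : Type*} [MetricSpace X] {c : ℕ} (hc : 2 ≤ c)
    (r : ℝ) (D : Multiset (X × Fin c)) {t : ℕ} (xs : Fin t → X) (ys : Fin t → Fin c)
    (a b : Fin t → Fin c) (estar : Fin t → ℤ)
    (ha : ∀ i, a i = rNNpred (by omega : 0 < c) r D (xs i))
    (hb : ∀ i, b i = secondLabel hc (fun l => votes (Nr r D (xs i)) l) (a i))
    (he : ∀ i, estar i =
      ⌈(((votes (Nr r D (xs i)) (a i) : ℤ) - (votes (Nr r D (xs i)) (b i) : ℤ) +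
          if b i < a i then 1 else 0 : ℤ) : ℚ) / 2⌉ - 1)
    (e : ℕ) (Dstar : Multiset (X × Fin c)) (hD : pSize D Dstar ≤ e) :
    (Finset.univ.filter (fun i => a i = ys i ∧ (e : ℤ) ≤ estar i)).card ≤
      (Finset.univ.filter (fun i => rNNpred (by omega : 0 < c) r Dstar (xs i) = ys i)).card := by
  apply Finset.card_le_card
  intro i hi
  simp only [Finset.mem_filter] at hi ⊢
  obtain ⟨-, hay, hee⟩ := hi
  refine ⟨Finset.mem_univ _, ?_⟩
  rw [← hay]
  set x := xs i with hx
  -- the gap inequality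
  have hceil : (e : ℤ) <
      ⌈(((votes (Nr r D x) (a i) : ℤ) - (votes (Nr r D x) (b i) : ℤ) +
          if b i < a i then 1 else 0 : ℤ) : ℚ) / 2⌉ := by
    rw [he i] at hee
    linarith
  have hq := Int.lt_ceil.mp hceil
  have hkey : 2 * (e : ℤ) <
      (votes (Nr r D x) (a i) : ℤ) - (votes (Nr r D x) (b i) : ℤ) +
        (if b i < a i then 1 else 0 : ℤ) := by
    have h2 : (2 * (e : ℤ) : ℚ) <
        (((votes (Nr r D x) (a i) : ℤ) - (votes (Nr r D x) (b i) : ℤ) +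
          if b i < a i then 1 else 0 : ℤ) : ℚ) := by
      push_cast at hq ⊢
      linarith
    exact_mod_cast h2
  have hbnd := fun l => votes_Nr_bounds r D Dstar x e hD l
  have hbmem := secondLabel_mem hc (fun l => votes (Nr r D x) l) (a i)
  simp only [Finset.mem_filter] at hbmem
  rw [← hb i] at hbmem
  have hsb : ∀ l, l ≠ a i → votes (Nr r D x) l ≤ votes (Nr r D x) (b i) := hbmem.2.2
  -- non-strict bound for every label
  have hmax : ∀ l, votes (Nr r Dstar x) l ≤ votes (Nr r Dstar x) (a i) := by
    intro l
    rcases eq_or_ne l (a i) with rfl | hl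
    · exact le_refl _
    · have h1 := (hbnd l).2
      have h2 := (hbnd (a i)).1
      have h3 := hsb l hl
      have ht : (if b i < a i then 1 else 0 : ℤ) ≤ 1 := by split <;> norm_num
      have : (votes (Nr r Dstar x) l : ℤ) ≤ (votes (Nr r Dstar x) (a i) : ℤ) := by
        have h3' : (votes (Nr r D x) l : ℤ) ≤ (votes (Nr r D x) (b i) : ℤ) :=
          Int.ofNat_le.mpr h3
        linarith
      exact_mod_cast this
  -- strict bound for labels above `a i`
  have hstrict : ∀ l, a i < l → votes (Nr r Dstar x) l < votes (Nr r Dstar x) (a i) := by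
    intro l hl
    have h1 := (hbnd l).2
    have h2 := (hbnd (a i)).1
    by_cases hba : b i < a i
    · have hsl : votes (Nr r D x) l < votes (Nr r D x) (b i) := by
        have hba' : secondLabel hc (fun l => votes (Nr r D x) l) (a i) < a i := by
          rw [← hb i]; exact hba
        have := secondLabel_strict hc (fun l => votes (Nr r D x) l) (a i) l hba' hl
        rw [← hb i] at this
        exact this
      have ht : (if b i < a i then 1 else 0 : ℤ) = 1 := if_pos hba
      rw [ht] at hkey
      have hsl' : (votes (Nr r D x) l : ℤ) + 1 ≤ (votes (Nr r D x) (b i) : ℤ) := by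
        exact_mod_cast hsl
      have : (votes (Nr r Dstar x) l : ℤ) < (votes (Nr r Dstar x) (a i) : ℤ) := by
        linarith
      exact_mod_cast this
    · have ht : (if b i < a i then 1 else 0 : ℤ) = 0 := if_neg hba
      rw [ht] at hkey
      have h3 : votes (Nr r D x) l ≤ votes (Nr r D x) (b i) := hsb l (ne_of_gt hl)
      have h3' : (votes (Nr r D x) l : ℤ) ≤ (votes (Nr r D x) (b i) : ℤ) :=
        Int.ofNat_le.mpr h3
      have : (votes (Nr r Dstar x) l : ℤ) < (votes (Nr r Dstar x) (a i) : ℤ) := by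
        linarith
      exact_mod_cast this
  exact majLabel_eq _ _ _ hmax hstrict
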